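/- Assume f_i ≠ 0 for all i. Let s be a TRB signature (the signature of some TRB pair) that is not initial, i.e., s ∉ {E_1,…,E_d}. Then there exist two TRB pairs whose J-pair [m,p] is signed s, i.e., m·sig(p) = s. -/

import Mathlib

namespace TRB

open MvPolynomial
open scoped Classical

/-- Monomials in the variables `x₁, …, xₙ`, identified with their exponent vectors;
a monomial `m₁` divides `m₂` iff the exponent vector of `m₁` is componentwise `≤`. -/
abbrev Mon (n : ℕ) := Fin n →₀ ℕ

/-- Module monomials (signatures) `x^α E_i` of the free module `P^d`. -/
abbrev Sig (n d : ℕ) := Mon n × Fin d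

/-- The action of a monomial on a module monomial: `m • (x^α E_i) = (m x^α) E_i`. -/
noncomputable def Sig.smul {n d : ℕ} (m : Mon n) (s : Sig n d) : Sig n d := (m + s.1, s.2)

/-- An admissible monomial order on the monomials of `P = K[x₁,…,xₙ]`:
a (strict) linear order such that `1 ⪯ m` for every monomial `m`, and
multiplication by a monomial is strictly monotone. -/
structure MonOrder (n : ℕ) where
  lt : Mon n → Mon n → Prop
  irrefl : ∀ a, ¬ lt a a
  trans : ∀ a b c, lt a b → lt b c → lt a c
  total : ∀ a b, lt a b ∨ a = b ∨ lt b a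
  zero_lt : ∀ a, a ≠ 0 → lt 0 a
  mul_lt_mul : ∀ (m a b : Mon n), lt a b → lt (m + a) (m + b)

/-- An admissible signature order on module monomials:
a (strict) linear order with `s ⪯ m • s` for every monomial `m`, and such that
multiplication by a monomial is strictly monotone. -/
structure SigOrder (n d : ℕ) where
  lt : Sig n d → Sig n d → Prop
  irrefl : ∀ s, ¬ lt s s
  trans : ∀ s t r, lt s t → lt t r → lt s r
  total : ∀ s t, lt s t ∨ s = t ∨ lt t s
  le_smul : ∀ (m : Mon n) (s : Sig n d), s = Sig.smul m s ∨ lt s (Sig.smul m s)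
  smul_lt_smul : ∀ (m : Mon n) (s t : Sig n d), lt s t → lt (Sig.smul m s) (Sig.smul m t)

/-- Non-strict version of a monomial order. -/
def MonOrder.le {n : ℕ} (mo : MonOrder n) (a b : Mon n) : Prop := mo.lt a b ∨ a = b

/-- Non-strict version of a signature order. -/
def SigOrder.le {n d : ℕ} (so : SigOrder n d) (s t : Sig n d) : Prop := so.lt s t ∨ s = t

/-- The `≺_m`-leading monomial of a polynomial (junk value `0` on the zero polynomial). -/
noncomputable def MonOrder.lm {n : ℕ} {K : Type*} [CommSemiring K] (mo : MonOrder n)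
    (v : MvPolynomial (Fin n) K) : Mon n :=
  if h : ∃ m ∈ v.support, ∀ m' ∈ v.support, m' ≠ m → mo.lt m' m then h.choose else 0

/-- The signature of a module element `u ∈ P^d`: the `≺_s`-largest module monomial
`x^α E_i` whose coefficient in `u` is nonzero (junk value on `u = 0`). -/
noncomputable def SigOrder.sig {n d : ℕ} [NeZero d] {K : Type*} [CommSemiring K]
    (so : SigOrder n d) (u : Fin d → MvPolynomial (Fin n) K) : Sig n d :=
  if h : ∃ s : Sig n d, (u s.2).coeff s.1 ≠ 0 ∧
      ∀ t : Sig n d, (u t.2).coeff t.1 ≠ 0 → t ≠ s → so.lt t s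
  then h.choose else (0, ⟨0, Nat.pos_of_ne_zero (NeZero.ne d)⟩)

/-- The ambient type of candidate pairs `(u, v) ∈ P^d × P`. -/
abbrev PairT (K : Type*) [CommSemiring K] (n d : ℕ) :=
  (Fin d → MvPolynomial (Fin n) K) × MvPolynomial (Fin n) K

variable {K : Type*} [Field K] {n d : ℕ}

/-- `(u, v)` is a pair (w.r.t. the input `f`) if `u ⬝ f = Σ_i u_i f_i = v`. -/
def IsPair (f : Fin d → MvPolynomial (Fin n) K) (p : PairT K n d) : Prop :=
  ∑ i, p.1 i * f i = p.2

/-- Leading monomial of a pair: `lm p = lm v`. -/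
noncomputable def lmP (mo : MonOrder n) (p : PairT K n d) : Mon n := mo.lm p.2

/-- Signature of a pair: `sig p = sig u`. -/
noncomputable def sigP [NeZero d] (so : SigOrder n d) (p : PairT K n d) : Sig n d :=
  so.sig p.1

/-- The pair order: `p ≺_p q` iff `lm(p)·sig(q) ≺_s lm(q)·sig(p)`. -/
def PairLt [NeZero d] (mo : MonOrder n) (so : SigOrder n d) (p q : PairT K n d) : Prop :=
  so.lt (Sig.smul (lmP mo p) (sigP so q)) (Sig.smul (lmP mo q) (sigP so p))

/-- Pairs are similar if `lm(p)·sig(q) = lm(q)·sig(p)`. -/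
def Similar [NeZero d] (mo : MonOrder n) (so : SigOrder n d) (p q : PairT K n d) : Prop :=
  Sig.smul (lmP mo p) (sigP so q) = Sig.smul (lmP mo q) (sigP so p)

/-- `p ⪯_p q`. -/
def PairLE [NeZero d] (mo : MonOrder n) (so : SigOrder n d) (p q : PairT K n d) : Prop :=
  PairLt mo so p q ∨ Similar mo so p q

/-- Pairs are equivalent if they have the same signature and the same leading monomial. -/
def Equivalent [NeZero d] (mo : MonOrder n) (so : SigOrder n d) (p q : PairT K n d) : Prop :=
  sigP so p = sigP so q ∧ lmP mo p = lmP mo q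

/-- `p` is top reducible by `q`: both non-syzygy, `p ≺_p q` and `lm(q) ∣ lm(p)`. -/
def TopRed [NeZero d] (mo : MonOrder n) (so : SigOrder n d) (p q : PairT K n d) : Prop :=
  p.2 ≠ 0 ∧ q.2 ≠ 0 ∧ PairLt mo so p q ∧ lmP mo q ≤ lmP mo p

/-- A TRP pair: a non-syzygy pair that is top reducible by no pair. -/
def IsTRP [NeZero d] (f : Fin d → MvPolynomial (Fin n) K) (mo : MonOrder n)
    (so : SigOrder n d) (p : PairT K n d) : Prop :=
  IsPair f p ∧ p.2 ≠ 0 ∧ ∀ q : PairT K n d, IsPair f q → ¬ TopRed mo so p q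

/-- Divisibility of signatures: `x^α E_i ∣ x^β E_j` iff `i = j` and `x^α ∣ x^β`. -/
def SigDvd {n d : ℕ} (s t : Sig n d) : Prop := s.2 = t.2 ∧ s.1 ≤ t.1

/-- A TRB pair: a TRP pair `p` such that no TRP pair similar to `p` has signature
properly dividing `sig p`. -/
def IsTRB [NeZero d] (f : Fin d → MvPolynomial (Fin n) K) (mo : MonOrder n)
    (so : SigOrder n d) (p : PairT K n d) : Prop :=
  IsTRP f mo so p ∧ ∀ q : PairT K n d, IsTRP f mo so q → Similar mo so p q →
    SigDvd (sigP so q) (sigP so p) → sigP so q = sigP so p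

/-- A signature is syzygy if it is the signature of a syzygy pair `(u, 0)`, `u ≠ 0`. -/
def IsSyzygySig [NeZero d] (f : Fin d → MvPolynomial (Fin n) K) (so : SigOrder n d)
    (s : Sig n d) : Prop :=
  ∃ u : Fin d → MvPolynomial (Fin n) K, u ≠ 0 ∧ IsPair f (u, 0) ∧ so.sig u = s

/-- The sub-order `≺_{s,i}` on monomials: `x^α ≺_{s,i} x^β` iff `x^α E_i ≺_s x^β E_i`. -/
def SubOrder {n d : ℕ} (so : SigOrder n d) (i : Fin d) (a b : Mon n) : Prop :=
  so.lt (a, i) (b, i)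

/-- The sub-order `≺_{s,i}` coincides with `≺_m`. -/
def EqOrders {n d : ℕ} (so : SigOrder n d) (mo : MonOrder n) (i : Fin d) : Prop :=
  ∀ a b : Mon n, SubOrder so i a b ↔ mo.lt a b

/-- `≺_m` and `≺_s` are almost compatible: either every sub-order `≺_{s,i}` coincides
with `≺_m`, or there is exactly one index `k` with `≺_{s,k} ≠ ≺_m`, and this `k`
satisfies `x^α E_k ≺_s E_i` for every monomial `x^α` and every index `i ≠ k`. -/
def AlmostCompatible {n d : ℕ} (mo : MonOrder n) (so : SigOrder n d) : Prop :=
  (∀ i, EqOrders so mo i) ∨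
  (∃ k, ¬ EqOrders so mo k ∧ (∀ i, i ≠ k → EqOrders so mo i) ∧
    ∀ (a : Mon n) (i : Fin d), i ≠ k → so.lt (a, k) ((0 : Mon n), i))

/-- `≺_m` and `≺_s` are compatible: `s₁ ⪯_s s₂` and `m₁ ⪯_m m₂` imply
`m₁·s₁ ⪯_s m₂·s₂`, with equality only when `s₁ = s₂` and `m₁ = m₂`. -/
def Compatible {n d : ℕ} (mo : MonOrder n) (so : SigOrder n d) : Prop :=
  ∀ (s₁ s₂ : Sig n d) (m₁ m₂ : Mon n), so.le s₁ s₂ → mo.le m₁ m₂ →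
    so.le (Sig.smul m₁ s₁) (Sig.smul m₂ s₂) ∧
    (Sig.smul m₁ s₁ = Sig.smul m₂ s₂ → s₁ = s₂ ∧ m₁ = m₂)

/-- The multiplied pair `m·p = (X^m · u, X^m · v)`. -/
noncomputable def mulPair (m : Mon n) (p : PairT K n d) : PairT K n d :=
  (fun i => monomial m (1 : K) * p.1 i, monomial m (1 : K) * p.2)

/-- `[m, p]` is the J-pair of the non-similar non-syzygy pairs `p₁, p₂`:
`p` is the `≺_p`-smaller of the two and `m·lm(p) = lcm(lm p₁, lm p₂)`. -/
def IsJPair [NeZero d] (mo : MonOrder n) (so : SigOrder n d) (p₁ p₂ : PairT K n d)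
    (m : Mon n) (p : PairT K n d) : Prop :=
  p₁.2 ≠ 0 ∧ p₂.2 ≠ 0 ∧ ¬ Similar mo so p₁ p₂ ∧
  ((PairLt mo so p₁ p₂ ∧ p = p₁) ∨ (PairLt mo so p₂ p₁ ∧ p = p₂)) ∧
  m + lmP mo p = lmP mo p₁ ⊔ lmP mo p₂

/-- `G` is a Gröbner basis of the ideal `⟨f₁,…,f_d⟩` w.r.t. `≺_m`: `G` consists of
elements of the ideal, and for every nonzero `v` in the ideal there is a nonzero
`g ∈ G` with `lm g ∣ lm v`. -/
def IsGroebnerBasis (mo : MonOrder n) (f : Fin d → MvPolynomial (Fin n) K)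
    (G : Set (MvPolynomial (Fin n) K)) : Prop :=
  (∀ g ∈ G, g ∈ Ideal.span (Set.range f)) ∧
  ∀ v ∈ Ideal.span (Set.range f), v ≠ 0 →
    ∃ g ∈ G, g ≠ 0 ∧ mo.lm g ≤ mo.lm v


/-! ### Auxiliary lemmas -/

section Aux

variable {n d : ℕ}

theorem MonOrder.asymm (mo : MonOrder n) {a b : Mon n} (h : mo.lt a b) : ¬ mo.lt b a :=
  fun h' => mo.irrefl a (mo.trans a b a h h')

theorem MonOrder.eq_or_lt_of_le (mo : MonOrder n) {a b : Mon n} (h : a ≤ b) :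
    a = b ∨ mo.lt a b := by
  obtain ⟨c, rfl⟩ := le_iff_exists_add.mp h
  rcases eq_or_ne c 0 with rfl | hc
  · left; simp
  · right
    have h2 := mo.mul_lt_mul a 0 c (mo.zero_lt c hc)
    simpa using h2

theorem MonOrder.not_lt_of_le (mo : MonOrder n) {a b : Mon n} (h : a ≤ b) : ¬ mo.lt b a := by
  rcases mo.eq_or_lt_of_le h with rfl | h'
  · exact mo.irrefl a
  · exact mo.asymm h'

theorem MonOrder.cancel (mo : MonOrder n) {m a b : Mon n} (h : mo.lt (m + a) (m + b)) :
    mo.lt a b := by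
  rcases mo.total a b with h' | rfl | h'
  · exact h'
  · exact absurd h (mo.irrefl _)
  · exact absurd (mo.mul_lt_mul m b a h') (mo.asymm h)

theorem SigOrder.asymm (so : SigOrder n d) {s t : Sig n d} (h : so.lt s t) : ¬ so.lt t s :=
  fun h' => so.irrefl s (so.trans s t s h h')

theorem Sig.smul_smul (a b : Mon n) (s : Sig n d) :
    Sig.smul a (Sig.smul b s) = Sig.smul (a + b) s := by
  simp [Sig.smul, add_assoc]

theorem smul_comm' (a b : Mon n) (s : Sig n d) :
    Sig.smul a (Sig.smul b s) = Sig.smul b (Sig.smul a s) := by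
  rw [Sig.smul_smul, Sig.smul_smul, add_comm]

theorem SigOrder.cancel (so : SigOrder n d) {m : Mon n} {s t : Sig n d}
    (h : so.lt (Sig.smul m s) (Sig.smul m t)) : so.lt s t := by
  rcases so.total s t with h' | rfl | h'
  · exact h'
  · exact absurd h (so.irrefl _)
  · exact absurd (so.smul_lt_smul m t s h') (so.asymm h)

theorem SigOrder.not_lt_sub_of_le (so : SigOrder n d) {a b : Mon n} {i : Fin d} (h : a ≤ b) :
    ¬ so.lt (b, i) (a, i) := by
  obtain ⟨c, rfl⟩ := le_iff_exists_add.mp h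
  have hh : Sig.smul c ((a, i) : Sig n d) = (a + c, i) := by simp [Sig.smul, add_comm]
  rcases so.le_smul c ((a, i) : Sig n d) with h' | h'
  · rw [hh] at h'
    rw [← h']
    exact so.irrefl _
  · rw [hh] at h'
    exact so.asymm h'

theorem exists_max_finset {τ : Type*} (lt : τ → τ → Prop)
    (htrans : ∀ a b c, lt a b → lt b c → lt a c)
    (htotal : ∀ a b, lt a b ∨ a = b ∨ lt b a)
    {s : Finset τ} (hs : s.Nonempty) : ∃ a ∈ s, ∀ b ∈ s, b ≠ a → lt b a := by
  classical
  induction s using Finset.cons_induction with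
  | empty => exact absurd hs (by simp)
  | cons x s hx ih =>
    rcases s.eq_empty_or_nonempty with rfl | hs'
    · refine ⟨x, Finset.mem_cons_self x ∅, ?_⟩
      intro b hb hbx
      simp only [Finset.cons_empty, Finset.mem_singleton] at hb
      exact absurd hb hbx
    · obtain ⟨a, ha, hmax⟩ := ih hs'
      have hxa : x ≠ a := fun h => hx (h ▸ ha)
      rcases htotal x a with h | h | h
      · refine ⟨a, Finset.mem_cons_of_mem ha, ?_⟩
        intro b hb hba
        rcases Finset.mem_cons.mp hb with rfl | hb'
        · exact h
        · exact hmax b hb' hba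
      · exact absurd h hxa
      · refine ⟨x, Finset.mem_cons_self x s, ?_⟩
        intro b hb hbx
        rcases Finset.mem_cons.mp hb with rfl | hb'
        · exact absurd rfl hbx
        · rcases eq_or_ne b a with rfl | hba
          · exact h
          · exact htrans b a x (hmax b hb' hba) h

theorem exists_min_monset (lt : Mon n → Mon n → Prop)
    (htrans : ∀ a b c, lt a b → lt b c → lt a c)
    (hext : ∀ a b : Mon n, a ≤ b → ¬ lt b a)
    {A : Set (Mon n)} (hA : A.Nonempty) : ∃ a ∈ A, ∀ b ∈ A, ¬ lt b a := by
  by_contra hcon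
  push_neg at hcon
  obtain ⟨a₀, ha₀⟩ := hA
  have hstep : ∀ x : {y // y ∈ A}, ∃ z : {y // y ∈ A}, lt z.1 x.1 := by
    rintro ⟨x, hx⟩
    obtain ⟨b, hb, hlt⟩ := hcon x hx
    exact ⟨⟨b, hb⟩, hlt⟩
  let F : {y // y ∈ A} → {y // y ∈ A} := fun x => (hstep x).choose
  have hF : ∀ x, lt (F x).1 x.1 := fun x => (hstep x).choose_spec
  let g : ℕ → {y // y ∈ A} := fun k => F^[k] ⟨a₀, ha₀⟩
  have hg : ∀ k, lt (g (k + 1)).1 (g k).1 := by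
    intro k
    have h : g (k + 1) = F (g k) := Function.iterate_succ_apply' F k _
    rw [h]
    exact hF (g k)
  have hchain : ∀ i j : ℕ, i < j → lt (g j).1 (g i).1 := by
    intro i j hij
    induction j with
    | zero => omega
    | succ j ih =>
      rcases Nat.lt_succ_iff_lt_or_eq.mp hij with h | rfl
      · exact htrans _ _ _ (hg j) (ih h)
      · exact hg i
  obtain ⟨i, j, hij, hle⟩ := (wellQuasiOrdered_le (α := Mon n)) (fun k => (g k).1)
  exact hext _ _ hle (hchain i j hij)

theorem exists_min_sigset (so : SigOrder n d) {A : Set (Sig n d)} (hA : A.Nonempty) :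
    ∃ a ∈ A, ∀ b ∈ A, ¬ so.lt b a := by
  classical
  have hsub : ∀ i : Fin d, (∃ m, (m, i) ∈ A) →
      ∃ m, (m, i) ∈ A ∧ ∀ b, (b, i) ∈ A → ¬ so.lt (b, i) (m, i) := by
    intro i hi
    obtain ⟨m, hm, hmin⟩ := exists_min_monset (fun a b => so.lt (a, i) (b, i))
      (fun a b c hab hbc => so.trans _ _ _ hab hbc)
      (fun a b hab => so.not_lt_sub_of_le hab)
      (A := {m | (m, i) ∈ A}) ⟨hi.choose, hi.choose_spec⟩
    exact ⟨m, hm, fun b hb => hmin b hb⟩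
  let sel : Fin d → Mon n := fun i => if h : ∃ m, (m, i) ∈ A then (hsub i h).choose else 0
  have hsel : ∀ (i : Fin d) (h : ∃ m, (m, i) ∈ A),
      (sel i, i) ∈ A ∧ ∀ b, (b, i) ∈ A → ¬ so.lt (b, i) (sel i, i) := by
    intro i h
    simp only [sel, dif_pos h]
    exact (hsub i h).choose_spec
  let C : Finset (Sig n d) :=
    (Finset.univ.filter fun i : Fin d => ∃ m, (m, i) ∈ A).image fun i => (sel i, i)
  have hCne : C.Nonempty := by
    obtain ⟨a, ha⟩ := hA
    refine ⟨(sel a.2, a.2), Finset.mem_image.mpr ⟨a.2, Finset.mem_filter.mpr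
      ⟨Finset.mem_univ _, ⟨a.1, ?_⟩⟩, rfl⟩⟩
    rw [Prod.mk.eta]; exact ha
  obtain ⟨c, hcC, hcmax⟩ := exists_max_finset (fun x y : Sig n d => so.lt y x)
    (fun a b c hab hbc => so.trans c b a hbc hab)
    (fun a b => by
      rcases so.total a b with h | h | h
      · exact Or.inr (Or.inr h)
      · exact Or.inr (Or.inl h)
      · exact Or.inl h) hCne
  have hcA : c ∈ A := by
    obtain ⟨i, hi, rfl⟩ := Finset.mem_image.mp hcC
    exact (hsel i (Finset.mem_filter.mp hi).2).1
  refine ⟨c, hcA, ?_⟩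
  intro b hb hlt
  have hbex : ∃ m, (m, b.2) ∈ A := ⟨b.1, by rw [Prod.mk.eta]; exact hb⟩
  have hx : (sel b.2, b.2) ∈ C := Finset.mem_image.mpr ⟨b.2, Finset.mem_filter.mpr
    ⟨Finset.mem_univ _, hbex⟩, rfl⟩
  have h1 : ¬ so.lt b (sel b.2, b.2) := by
    have h := (hsel b.2 hbex).2 b.1 (by rw [Prod.mk.eta]; exact hb)
    rwa [Prod.mk.eta] at h
  rcases eq_or_ne ((sel b.2, b.2) : Sig n d) c with heq | hne
  · exact h1 (heq ▸ hlt)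
  · exact h1 (so.trans _ _ _ hlt (hcmax _ hx hne))

end Aux
section Aux2

open MvPolynomial

variable {n d : ℕ} {K : Type*} [Field K]

theorem MonOrder.lm_spec (mo : MonOrder n) {v : MvPolynomial (Fin n) K} (hv : v ≠ 0) :
    mo.lm v ∈ v.support ∧ ∀ m' ∈ v.support, m' ≠ mo.lm v → mo.lt m' (mo.lm v) := by
  have h : ∃ m ∈ v.support, ∀ m' ∈ v.support, m' ≠ m → mo.lt m' m :=
    exists_max_finset mo.lt mo.trans mo.total (MvPolynomial.support_nonempty.mpr hv)
  unfold MonOrder.lm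
  rw [dif_pos h]
  exact h.choose_spec

theorem MonOrder.lm_unique (mo : MonOrder n) {v : MvPolynomial (Fin n) K} {m : Mon n}
    (hm : m ∈ v.support) (hmax : ∀ m' ∈ v.support, m' ≠ m → mo.lt m' m) : mo.lm v = m := by
  have hv : v ≠ 0 := fun h => by simp [h] at hm
  obtain ⟨h1, h2⟩ := mo.lm_spec hv
  by_contra hne
  exact mo.asymm (hmax _ h1 hne) (h2 m hm (Ne.symm hne))

theorem MonOrder.coeff_lm_ne_zero (mo : MonOrder n) {v : MvPolynomial (Fin n) K} (hv : v ≠ 0) :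
    MvPolynomial.coeff (mo.lm v) v ≠ 0 :=
  MvPolynomial.mem_support_iff.mp (mo.lm_spec hv).1

theorem MonOrder.eq_lm_or_lt (mo : MonOrder n) {v : MvPolynomial (Fin n) K} {b : Mon n}
    (hb : MvPolynomial.coeff b v ≠ 0) : b = mo.lm v ∨ mo.lt b (mo.lm v) := by
  have hv : v ≠ 0 := fun h => hb (by simp [h])
  rcases eq_or_ne b (mo.lm v) with h | h
  · exact Or.inl h
  · exact Or.inr ((mo.lm_spec hv).2 b (MvPolynomial.mem_support_iff.mpr hb) h)

theorem MonOrder.coeff_eq_zero_of_lm_lt (mo : MonOrder n) {v : MvPolynomial (Fin n) K}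
    {b : Mon n} (h : mo.lt (mo.lm v) b) : MvPolynomial.coeff b v = 0 := by
  by_contra hb
  rcases mo.eq_lm_or_lt hb with rfl | h'
  · exact mo.irrefl _ h
  · exact mo.asymm h h'

theorem MonOrder.lm_monomial_mul (mo : MonOrder n) {v : MvPolynomial (Fin n) K} (hv : v ≠ 0)
    (m : Mon n) : MvPolynomial.monomial m (1 : K) * v ≠ 0 ∧
      mo.lm (MvPolynomial.monomial m (1 : K) * v) = m + mo.lm v := by
  have hco : ∀ b : Mon n, MvPolynomial.coeff b (MvPolynomial.monomial m (1 : K) * v) =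
      if m ≤ b then MvPolynomial.coeff (b - m) v else 0 := by
    intro b
    rw [MvPolynomial.coeff_monomial_mul']
    split_ifs with h <;> simp
  have h1 : MvPolynomial.coeff (m + mo.lm v) (MvPolynomial.monomial m (1 : K) * v) ≠ 0 := by
    rw [hco, if_pos le_self_add, add_tsub_cancel_left]
    exact mo.coeff_lm_ne_zero hv
  have hne : MvPolynomial.monomial m (1 : K) * v ≠ 0 := fun h => h1 (by simp [h])
  refine ⟨hne, mo.lm_unique (MvPolynomial.mem_support_iff.mpr h1) ?_⟩
  intro b hb hbne
  have hb' := MvPolynomial.mem_support_iff.mp hb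
  rw [hco] at hb'
  by_cases hle : m ≤ b
  · rw [if_pos hle] at hb'
    rcases mo.eq_lm_or_lt hb' with h | h
    · exact absurd (by rw [← h, add_tsub_cancel_of_le hle]) hbne
    · have h2 := mo.mul_lt_mul m _ _ h
      rwa [add_tsub_cancel_of_le hle] at h2
  · rw [if_neg hle] at hb'
    exact absurd rfl hb'

theorem MonOrder.lm_smul (mo : MonOrder n) {v : MvPolynomial (Fin n) K} {c : K} (hc : c ≠ 0) :
    mo.lm (c • v) = mo.lm v := by
  have hsupp : (c • v).support = v.support := by
    ext a
    simp [MvPolynomial.mem_support_iff, MvPolynomial.coeff_smul, smul_eq_mul, hc]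
  unfold MonOrder.lm
  rw [hsupp]

theorem SigOrder.sig_exists (so : SigOrder n d) {u : Fin d → MvPolynomial (Fin n) K}
    (hu : u ≠ 0) : ∃ s : Sig n d, (u s.2).coeff s.1 ≠ 0 ∧
      ∀ t : Sig n d, (u t.2).coeff t.1 ≠ 0 → t ≠ s → so.lt t s := by
  classical
  let S : Finset (Sig n d) :=
    Finset.univ.biUnion (fun i : Fin d => (u i).support.image fun a => ((a, i) : Sig n d))
  have hmem : ∀ t : Sig n d, t ∈ S ↔ (u t.2).coeff t.1 ≠ 0 := by
    intro t
    constructor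
    · intro ht
      obtain ⟨i, -, ht'⟩ := Finset.mem_biUnion.mp ht
      obtain ⟨a, ha, heq⟩ := Finset.mem_image.mp ht'
      rw [← heq]
      exact MvPolynomial.mem_support_iff.mp ha
    · intro ht
      exact Finset.mem_biUnion.mpr ⟨t.2, Finset.mem_univ _, Finset.mem_image.mpr
        ⟨t.1, MvPolynomial.mem_support_iff.mpr ht, Prod.mk.eta⟩⟩
  have hSne : S.Nonempty := by
    obtain ⟨i, hi⟩ := Function.ne_iff.mp hu
    obtain ⟨a, ha⟩ := MvPolynomial.support_nonempty.mpr hi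
    exact ⟨(a, i), (hmem (a, i)).mpr (MvPolynomial.mem_support_iff.mp ha)⟩
  obtain ⟨a, ha, hmax⟩ := exists_max_finset so.lt so.trans so.total hSne
  exact ⟨a, (hmem a).mp ha, fun t ht htne => hmax t ((hmem t).mpr ht) htne⟩

theorem SigOrder.sig_spec [NeZero d] (so : SigOrder n d) {u : Fin d → MvPolynomial (Fin n) K}
    (hu : u ≠ 0) : (u (so.sig u).2).coeff (so.sig u).1 ≠ 0 ∧
      ∀ t : Sig n d, (u t.2).coeff t.1 ≠ 0 → t ≠ so.sig u → so.lt t (so.sig u) := by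
  have h := so.sig_exists hu
  unfold SigOrder.sig
  rw [dif_pos h]
  exact h.choose_spec

theorem SigOrder.sig_unique [NeZero d] (so : SigOrder n d) {u : Fin d → MvPolynomial (Fin n) K}
    {s : Sig n d} (h1 : (u s.2).coeff s.1 ≠ 0)
    (h2 : ∀ t : Sig n d, (u t.2).coeff t.1 ≠ 0 → t ≠ s → so.lt t s) : so.sig u = s := by
  have hu : u ≠ 0 := fun h => h1 (by simp [h])
  obtain ⟨g1, g2⟩ := so.sig_spec hu
  by_contra hne
  exact so.asymm (h2 _ g1 hne) (g2 s h1 (Ne.symm hne))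

theorem SigOrder.eq_sig_or_lt [NeZero d] (so : SigOrder n d)
    {u : Fin d → MvPolynomial (Fin n) K} {t : Sig n d} (ht : (u t.2).coeff t.1 ≠ 0) :
    t = so.sig u ∨ so.lt t (so.sig u) := by
  have hu : u ≠ 0 := fun h => ht (by simp [h])
  rcases eq_or_ne t (so.sig u) with h | h
  · exact Or.inl h
  · exact Or.inr ((so.sig_spec hu).2 t ht h)

theorem SigOrder.coeff_eq_zero_of_sig_lt [NeZero d] (so : SigOrder n d)
    {u : Fin d → MvPolynomial (Fin n) K} {t : Sig n d} (h : so.lt (so.sig u) t) :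
    (u t.2).coeff t.1 = 0 := by
  by_contra ht
  rcases so.eq_sig_or_lt ht with rfl | h'
  · exact so.irrefl _ h
  · exact so.asymm h h'

theorem SigOrder.sig_monomial_smul [NeZero d] (so : SigOrder n d)
    {u : Fin d → MvPolynomial (Fin n) K} (hu : u ≠ 0) (m : Mon n) :
    (fun i => MvPolynomial.monomial m (1 : K) * u i) ≠ 0 ∧
      so.sig (fun i => MvPolynomial.monomial m (1 : K) * u i) = Sig.smul m (so.sig u) := by
  obtain ⟨i, hi⟩ := Function.ne_iff.mp hu
  have hmono : (MvPolynomial.monomial m (1 : K)) ≠ 0 := by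
    simp [MvPolynomial.monomial_eq_zero]
  have hne : (fun i => MvPolynomial.monomial m (1 : K) * u i) ≠ 0 := by
    intro h
    have h2 := congrFun h i
    simp only [Pi.zero_apply] at h2
    exact hi ((mul_eq_zero.mp h2).resolve_left hmono)
  refine ⟨hne, so.sig_unique ?_ ?_⟩
  · show MvPolynomial.coeff (Sig.smul m (so.sig u)).1
      (MvPolynomial.monomial m (1 : K) * u (Sig.smul m (so.sig u)).2) ≠ 0
    simp only [Sig.smul]
    rw [MvPolynomial.coeff_monomial_mul', if_pos le_self_add, add_tsub_cancel_left, one_mul]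
    exact (so.sig_spec hu).1
  · intro t ht htne
    rw [MvPolynomial.coeff_monomial_mul'] at ht
    by_cases hle : m ≤ t.1
    · rw [if_pos hle, one_mul] at ht
      have ht' : (u ((t.1 - m, t.2) : Sig n d).2).coeff ((t.1 - m, t.2) : Sig n d).1 ≠ 0 := ht
      rcases so.eq_sig_or_lt ht' with h | h
      · refine absurd ?_ htne
        rw [← h]
        simp only [Sig.smul]
        rw [add_tsub_cancel_of_le hle]
      · have h2 := so.smul_lt_smul m _ _ h
        have heq : Sig.smul m ((t.1 - m, t.2) : Sig n d) = t := by
          simp only [Sig.smul]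
          rw [add_tsub_cancel_of_le hle]
        rwa [heq] at h2
    · rw [if_neg hle] at ht
      exact absurd rfl ht

end Aux2
section Aux3
set_option linter.unusedSectionVars false

open MvPolynomial

variable {n d : ℕ} {K : Type*} [Field K] [NeZero d]

theorem fst_ne_zero {f : Fin d → MvPolynomial (Fin n) K} {p : PairT K n d}
    (hp : IsPair f p) (h2 : p.2 ≠ 0) : p.1 ≠ 0 := by
  intro h
  apply h2
  rw [← hp, h]
  simp

theorem isPair_mulPair {f : Fin d → MvPolynomial (Fin n) K} {p : PairT K n d}
    (hp : IsPair f p) (m : Mon n) : IsPair f (mulPair m p) := by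
  unfold IsPair mulPair at *
  simp only
  rw [← hp, Finset.mul_sum]
  exact Finset.sum_congr rfl fun i _ => mul_assoc _ _ _

theorem isPair_combine {f : Fin d → MvPolynomial (Fin n) K} {p q : PairT K n d}
    (hp : IsPair f p) (hq : IsPair f q) (a b : K) :
    IsPair f (fun k => a • p.1 k - b • q.1 k, a • p.2 - b • q.2) := by
  unfold IsPair at *
  simp only [sub_mul, smul_mul_assoc, Finset.sum_sub_distrib, ← Finset.smul_sum, hp, hq]

theorem lmP_mulPair (mo : MonOrder n) {p : PairT K n d} (h2 : p.2 ≠ 0) (m : Mon n) :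
    (mulPair m p).2 ≠ 0 ∧ lmP mo (mulPair (K := K) m p) = m + lmP mo p :=
  mo.lm_monomial_mul h2 m

theorem sigP_mulPair (so : SigOrder n d) {p : PairT K n d} (h1 : p.1 ≠ 0) (m : Mon n) :
    (mulPair m p).1 ≠ 0 ∧ sigP so (mulPair (K := K) m p) = Sig.smul m (sigP so p) :=
  so.sig_monomial_smul h1 m

theorem similar_trans {mo : MonOrder n} {so : SigOrder n d} {p q r : PairT K n d}
    (h1 : Similar mo so p q) (h2 : Similar mo so q r) : Similar mo so p r := by
  unfold Similar Sig.smul at h1 h2 ⊢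
  rw [Prod.mk.injEq] at h1 h2 ⊢
  obtain ⟨h1a, h1b⟩ := h1
  obtain ⟨h2a, h2b⟩ := h2
  refine ⟨?_, h2b.trans h1b⟩
  have h3 : (lmP mo p + (sigP so r).1) + (sigP so q).1
      = (lmP mo r + (sigP so p).1) + (sigP so q).1 := by
    calc (lmP mo p + (sigP so r).1) + (sigP so q).1
        = ((lmP mo p + (sigP so q).1) + (sigP so r).1) := by abel
      _ = ((lmP mo q + (sigP so p).1) + (sigP so r).1) := by rw [h1a]
      _ = ((lmP mo q + (sigP so r).1) + (sigP so p).1) := by abel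
      _ = ((lmP mo r + (sigP so q).1) + (sigP so p).1) := by rw [h2a]
      _ = (lmP mo r + (sigP so p).1) + (sigP so q).1 := by abel
  exact add_right_cancel h3

theorem sigdvd_trans {a b c : Sig n d} (h1 : SigDvd a b) (h2 : SigDvd b c) : SigDvd a c :=
  ⟨h1.1.trans h2.1, h1.2.trans h2.2⟩

theorem pairLt_trans {mo : MonOrder n} {so : SigOrder n d} {p q r : PairT K n d}
    (h1 : PairLt mo so p q) (h2 : PairLt mo so q r) : PairLt mo so p r := by
  unfold PairLt at *
  apply so.cancel (m := lmP mo q)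
  rw [smul_comm' (lmP mo q) (lmP mo p), smul_comm' (lmP mo q) (lmP mo r)]
  have A := so.smul_lt_smul (lmP mo p) _ _ h2
  have B := so.smul_lt_smul (lmP mo r) _ _ h1
  have C : Sig.smul (lmP mo p) (Sig.smul (lmP mo r) (sigP so q))
      = Sig.smul (lmP mo r) (Sig.smul (lmP mo p) (sigP so q)) := smul_comm' _ _ _
  rw [C] at A
  exact so.trans _ _ _ A B

theorem pairLt_similar_right {mo : MonOrder n} {so : SigOrder n d} {P r r' : PairT K n d}
    (h : PairLt mo so P r) (hsim : Similar mo so r r') : PairLt mo so P r' := by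
  unfold PairLt at *
  unfold Similar at hsim
  apply so.cancel (m := lmP mo r)
  have e1 : Sig.smul (lmP mo r) (Sig.smul (lmP mo P) (sigP so r'))
      = Sig.smul (lmP mo r') (Sig.smul (lmP mo P) (sigP so r)) := by
    rw [smul_comm', hsim, smul_comm']
  have e2 : Sig.smul (lmP mo r) (Sig.smul (lmP mo r') (sigP so P))
      = Sig.smul (lmP mo r') (Sig.smul (lmP mo r) (sigP so P)) := smul_comm' _ _ _
  rw [e1, e2]
  exact so.smul_lt_smul _ _ _ h

theorem lm_le_of_similar_dvd {mo : MonOrder n} {so : SigOrder n d} {r r' : PairT K n d}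
    (hsim : Similar mo so r r') (hdvd : SigDvd (sigP so r') (sigP so r)) :
    lmP mo r' ≤ lmP mo r := by
  obtain ⟨ε, hε⟩ := le_iff_exists_add.mp hdvd.2
  unfold Similar Sig.smul at hsim
  rw [Prod.mk.injEq] at hsim
  have h1 := hsim.1
  rw [hε] at h1
  have h2 : lmP mo r + (sigP so r').1 = (lmP mo r' + ε) + (sigP so r').1 := by
    rw [h1]; abel
  exact le_iff_exists_add.mpr ⟨ε, add_right_cancel h2⟩

theorem no_syzygy_of_TRP {f : Fin d → MvPolynomial (Fin n) K} (mo : MonOrder n)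
    (so : SigOrder n d) {p : PairT K n d} (hp : IsTRP f mo so p) {β : Mon n}
    (hβ : β ≤ (sigP so p).1) :
    ¬ ∃ u : Fin d → MvPolynomial (Fin n) K, u ≠ 0 ∧ IsPair f (u, 0) ∧
      so.sig u = (β, (sigP so p).2) := by
  rintro ⟨u, hu, hupair, husig⟩
  obtain ⟨hpair, h2, hnored⟩ := hp
  have h1 : p.1 ≠ 0 := fst_ne_zero hpair h2
  have hδβ : ((sigP so p).1 - β) + β = (sigP so p).1 := tsub_add_cancel_of_le hβ
  obtain ⟨hWne, hWsig⟩ := so.sig_monomial_smul hu ((sigP so p).1 - β)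
  set δ : Mon n := (sigP so p).1 - β with hδdef
  set W : Fin d → MvPolynomial (Fin n) K := fun k => MvPolynomial.monomial δ (1 : K) * u k
    with hWdef
  have hWsig' : so.sig W = sigP so p := by
    rw [hWdef]
    rw [hWsig, husig]
    simp only [Sig.smul]
    rw [hδβ]
  have hWpair : IsPair f (W, (0 : MvPolynomial (Fin n) K)) := by
    have h := isPair_mulPair hupair δ
    unfold IsPair mulPair at h
    unfold IsPair
    simpa using h
  set c1 : K := (p.1 (sigP so p).2).coeff (sigP so p).1 with hc1def
  set c2 : K := (W (sigP so p).2).coeff (sigP so p).1 with hc2def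
  have hc1 : c1 ≠ 0 := (so.sig_spec h1).1
  have hc2 : c2 ≠ 0 := by
    have h := (so.sig_spec hWne).1
    have he : so.sig W = sigP so p := hWsig'
    rw [he] at h
    exact h
  set q : PairT K n d := (fun k => c2 • p.1 k - c1 • W k, c2 • p.2 - c1 • (0 : MvPolynomial (Fin n) K)) with hqdef
  have hqpair : IsPair f q := isPair_combine hpair hWpair c2 c1
  have hq2' : q.2 = c2 • p.2 := by rw [hqdef]; simp
  have hq2 : q.2 ≠ 0 := by rw [hq2']; exact smul_ne_zero hc2 h2
  have hq1 : q.1 ≠ 0 := fst_ne_zero hqpair hq2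
  have hqcoeff : ∀ t : Sig n d, (q.1 t.2).coeff t.1 ≠ 0 → so.lt t (sigP so p) := by
    intro t ht
    have hts : t ≠ sigP so p := by
      intro h
      apply ht
      rw [h, hqdef]
      simp only
      rw [MvPolynomial.coeff_sub, MvPolynomial.coeff_smul, MvPolynomial.coeff_smul,
        ← hc1def, ← hc2def, smul_eq_mul, smul_eq_mul, mul_comm c2 c1, sub_self]
    have hor : (p.1 t.2).coeff t.1 ≠ 0 ∨ (W t.2).coeff t.1 ≠ 0 := by
      by_contra hcon
      push_neg at hcon
      apply ht
      rw [hqdef]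
      simp only
      rw [MvPolynomial.coeff_sub, MvPolynomial.coeff_smul, MvPolynomial.coeff_smul,
        hcon.1, hcon.2, smul_zero, smul_zero, sub_zero]
    rcases hor with h | h
    · rcases so.eq_sig_or_lt h with h' | h'
      · exact absurd h' hts
      · exact h'
    · rcases so.eq_sig_or_lt h with h' | h'
      · rw [hWsig'] at h'
        exact absurd h' hts
      · rwa [hWsig'] at h'
  have hqsig : so.lt (sigP so q) (sigP so p) := hqcoeff _ (so.sig_spec hq1).1
  have hlmq : lmP mo q = lmP mo p := by
    have h : mo.lm (c2 • p.2) = mo.lm p.2 := mo.lm_smul hc2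
    show mo.lm q.2 = mo.lm p.2
    rw [hq2']
    exact h
  exact hnored q hqpair ⟨h2, hq2, by
    unfold PairLt
    rw [hlmq]
    exact so.smul_lt_smul _ _ _ hqsig, le_of_eq hlmq⟩

end Aux3
section Aux4
set_option linter.unusedSectionVars false

open MvPolynomial

variable {n d : ℕ} {K : Type*} [Field K] [NeZero d]

theorem exists_TRP_min {f : Fin d → MvPolynomial (Fin n) K} (mo : MonOrder n)
    (so : SigOrder n d) (hf : ∀ i, f i ≠ 0) (S : Sig n d)
    (hns : ¬ ∃ u : Fin d → MvPolynomial (Fin n) K, u ≠ 0 ∧ IsPair f (u, 0) ∧ so.sig u = S) :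
    ∃ q : PairT K n d, IsTRP f mo so q ∧ sigP so q = S ∧
      ∀ r : PairT K n d, IsPair f r → r.2 ≠ 0 → sigP so r = S →
        ¬ mo.lt (lmP mo r) (lmP mo q) := by
  classical
  set p₀ : PairT K n d := (fun k => if k = S.2 then MvPolynomial.monomial S.1 (1 : K) else 0,
    MvPolynomial.monomial S.1 (1 : K) * f S.2) with hp₀
  have hp₀pair : IsPair f p₀ := by
    unfold IsPair
    rw [hp₀]
    simp only [ite_mul, zero_mul]
    rw [Finset.sum_ite_eq' Finset.univ S.2 (fun k => MvPolynomial.monomial S.1 (1 : K) * f k)]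
    simp
  have hp₀2 : p₀.2 ≠ 0 := mul_ne_zero (by simp [MvPolynomial.monomial_eq_zero]) (hf S.2)
  have hp₀sig : sigP so p₀ = S := by
    apply so.sig_unique
    · rw [hp₀]
      simp [MvPolynomial.coeff_monomial]
    · intro t ht htne
      exfalso
      apply htne
      rw [hp₀] at ht
      simp only at ht
      by_cases h : t.2 = S.2
      · rw [if_pos h, MvPolynomial.coeff_monomial] at ht
        have h1 : S.1 = t.1 := by
          by_contra hne
          rw [if_neg hne] at ht
          exact ht rfl
        exact Prod.ext h1.symm h
      · rw [if_neg h] at ht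
        simp at ht
  obtain ⟨l₀, hl₀A, hl₀min⟩ := exists_min_monset mo.lt mo.trans
    (fun a b hab => mo.not_lt_of_le hab)
    (A := { l | ∃ r : PairT K n d, IsPair f r ∧ r.2 ≠ 0 ∧ sigP so r = S ∧ lmP mo r = l })
    ⟨lmP mo p₀, p₀, hp₀pair, hp₀2, hp₀sig, rfl⟩
  obtain ⟨q, hqpair, hq2, hqsig, hql⟩ := hl₀A
  have hmin : ∀ r : PairT K n d, IsPair f r → r.2 ≠ 0 → sigP so r = S →
      ¬ mo.lt (lmP mo r) (lmP mo q) := by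
    intro r h1 h2 h3
    rw [hql]
    exact hl₀min (lmP mo r) ⟨r, h1, h2, h3, rfl⟩
  refine ⟨q, ⟨hqpair, hq2, ?_⟩, hqsig, hmin⟩
  intro r hrpair hred
  obtain ⟨-, hr2, hplt, hdvd⟩ := hred
  have hr1 : r.1 ≠ 0 := fst_ne_zero hrpair hr2
  have hδeq : (lmP mo q - lmP mo r) + lmP mo r = lmP mo q := tsub_add_cancel_of_le hdvd
  set δ : Mon n := lmP mo q - lmP mo r with hδdef
  obtain ⟨hR1ne, hRsig⟩ := sigP_mulPair so hr1 δ
  obtain ⟨hR2ne, hRlm⟩ := lmP_mulPair mo hr2 δ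
  have hRpair := isPair_mulPair hrpair δ
  have hRlm' : lmP mo (mulPair (K := K) δ r) = lmP mo q := by rw [hRlm, hδeq]
  have hkey : so.lt (Sig.smul δ (sigP so r)) S := by
    apply so.cancel (m := lmP mo r)
    have h1 : Sig.smul (lmP mo r) (Sig.smul δ (sigP so r))
        = Sig.smul (lmP mo q) (sigP so r) := by
      rw [Sig.smul_smul, add_comm (lmP mo r) δ, hδeq]
    rw [h1]
    have h2 := hplt
    unfold PairLt at h2
    rwa [hqsig] at h2
  set c1 : K := (q.2).coeff (lmP mo q) with hc1def
  set c2 : K := ((mulPair (K := K) δ r).2).coeff (lmP mo q) with hc2def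
  have hc1 : c1 ≠ 0 := mo.coeff_lm_ne_zero hq2
  have hc2 : c2 ≠ 0 := by
    have h := mo.coeff_lm_ne_zero hR2ne
    have he : mo.lm ((mulPair (K := K) δ r).2) = lmP mo q := hRlm'
    rwa [he] at h
  set q' : PairT K n d := (fun k => c2 • q.1 k - c1 • ((mulPair (K := K) δ r).1 k),
    c2 • q.2 - c1 • ((mulPair (K := K) δ r).2)) with hq'def
  have hq'pair : IsPair f q' := isPair_combine hqpair hRpair c2 c1
  have hq'coeffS : (q'.1 S.2).coeff S.1 ≠ 0 := by
    rw [hq'def]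
    simp only
    rw [MvPolynomial.coeff_sub, MvPolynomial.coeff_smul, MvPolynomial.coeff_smul]
    have hz : (((mulPair (K := K) δ r).1) S.2).coeff S.1 = 0 := by
      have hlt : so.lt (so.sig ((mulPair (K := K) δ r).1)) S := by
        have he : so.sig ((mulPair (K := K) δ r).1) = Sig.smul δ (sigP so r) := hRsig
        rw [he]
        exact hkey
      exact so.coeff_eq_zero_of_sig_lt hlt
    rw [hz, smul_zero, sub_zero]
    have hq1 : q.1 ≠ 0 := fst_ne_zero hqpair hq2
    have hS : (q.1 S.2).coeff S.1 ≠ 0 := by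
      have h := (so.sig_spec hq1).1
      have he : so.sig q.1 = S := hqsig
      rwa [he] at h
    exact smul_ne_zero hc2 hS
  have hq'sig : sigP so q' = S := by
    apply so.sig_unique hq'coeffS
    intro t ht htne
    have hor : (q.1 t.2).coeff t.1 ≠ 0 ∨ (((mulPair (K := K) δ r).1) t.2).coeff t.1 ≠ 0 := by
      by_contra hcon
      push_neg at hcon
      apply ht
      rw [hq'def]
      simp only
      rw [MvPolynomial.coeff_sub, MvPolynomial.coeff_smul, MvPolynomial.coeff_smul,
        hcon.1, hcon.2, smul_zero, smul_zero, sub_zero]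
    rcases hor with h | h
    · rcases so.eq_sig_or_lt h with h' | h'
      · have he : so.sig q.1 = S := hqsig
        rw [he] at h'
        exact absurd h' htne
      · have he : so.sig q.1 = S := hqsig
        rwa [he] at h'
    · have he : so.sig ((mulPair (K := K) δ r).1) = Sig.smul δ (sigP so r) := hRsig
      rcases so.eq_sig_or_lt h with h' | h'
      · rw [he] at h'
        rw [h']
        exact hkey
      · rw [he] at h'
        exact so.trans _ _ _ h' hkey
  have hq'1 : q'.1 ≠ 0 := by
    intro h
    apply hq'coeffS
    rw [h]
    simp
  have hq'2 : q'.2 ≠ 0 := by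
    intro h
    apply hns
    refine ⟨q'.1, hq'1, ?_, hq'sig⟩
    have hp := hq'pair
    unfold IsPair at hp ⊢
    rw [← h]
    exact hp
  have hlmlt : mo.lt (lmP mo q') (lmP mo q) := by
    have hcoefflm : (q'.2).coeff (lmP mo q) = 0 := by
      rw [hq'def]
      simp only
      rw [MvPolynomial.coeff_sub, MvPolynomial.coeff_smul, MvPolynomial.coeff_smul,
        ← hc1def, ← hc2def, smul_eq_mul, smul_eq_mul, mul_comm c2 c1, sub_self]
    have hmem : (q'.2).coeff (lmP mo q') ≠ 0 := mo.coeff_lm_ne_zero hq'2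
    have hne : lmP mo q' ≠ lmP mo q := fun h => hmem (by rw [h]; exact hcoefflm)
    have hb : ∀ b : Mon n, (q'.2).coeff b ≠ 0 → b = lmP mo q ∨ mo.lt b (lmP mo q) := by
      intro b hbne
      have hor : (q.2).coeff b ≠ 0 ∨ ((mulPair (K := K) δ r).2).coeff b ≠ 0 := by
        by_contra hcon
        push_neg at hcon
        apply hbne
        rw [hq'def]
        simp only
        rw [MvPolynomial.coeff_sub, MvPolynomial.coeff_smul, MvPolynomial.coeff_smul,
          hcon.1, hcon.2, smul_zero, smul_zero, sub_zero]
      rcases hor with h | h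
      · exact mo.eq_lm_or_lt h
      · have h2 := mo.eq_lm_or_lt h
        rwa [show mo.lm ((mulPair (K := K) δ r).2) = lmP mo q from hRlm'] at h2
    rcases hb (lmP mo q') hmem with h | h
    · exact absurd h hne
    · exact h
  exact hmin q' hq'pair hq'2 hq'sig hlmlt

theorem finsupp_sum_pos {ε : Mon n} (h : ε ≠ 0) : 0 < ε.sum fun _ x => x := by
  rcases Finsupp.ne_iff.mp h with ⟨a, ha⟩
  simp only [Finsupp.coe_zero, Pi.zero_apply] at ha
  have haa : a ∈ ε.support := Finsupp.mem_support_iff.mpr ha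
  calc 0 < ε a := Nat.pos_of_ne_zero ha
    _ ≤ ε.sum fun _ x => x := Finset.single_le_sum (fun i _ => Nat.zero_le _) haa

theorem exists_TRB_of_TRP {f : Fin d → MvPolynomial (Fin n) K} (mo : MonOrder n)
    (so : SigOrder n d) :
    ∀ q : PairT K n d, IsTRP f mo so q →
      ∃ q', IsTRB f mo so q' ∧ Similar mo so q q' ∧ SigDvd (sigP so q') (sigP so q) := by
  have main : ∀ N : ℕ, ∀ q : PairT K n d, IsTRP f mo so q →
      ((sigP so q).1.sum fun _ x => x) ≤ N →
      ∃ q', IsTRB f mo so q' ∧ Similar mo so q q' ∧ SigDvd (sigP so q') (sigP so q) := by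
    intro N
    induction N using Nat.strong_induction_on with
    | _ N ih =>
      intro q hq hdeg
      by_cases hTRB : IsTRB f mo so q
      · exact ⟨q, hTRB, rfl, ⟨rfl, le_rfl⟩⟩
      · have hex : ∃ r, IsTRP f mo so r ∧ Similar mo so q r ∧
            SigDvd (sigP so r) (sigP so q) ∧ sigP so r ≠ sigP so q := by
          unfold IsTRB at hTRB
          push_neg at hTRB
          exact hTRB hq
        obtain ⟨r, hrTRP, hsim, hdvd, hne⟩ := hex
        obtain ⟨ε, hε⟩ := le_iff_exists_add.mp hdvd.2
        have hεne : ε ≠ 0 := by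
          rintro rfl
          rw [add_zero] at hε
          exact hne (Prod.ext hε.symm hdvd.1)
        have hsum : ((sigP so q).1.sum fun _ x => x)
            = ((sigP so r).1.sum fun _ x => x) + (ε.sum fun _ x => x) := by
          rw [hε]
          exact Finsupp.sum_add_index' (fun _ => rfl) (fun _ _ _ => rfl)
        have hpos := finsupp_sum_pos hεne
        have hlt : ((sigP so r).1.sum fun _ x => x) < N := by omega
        obtain ⟨q', hq', hsim', hdvd'⟩ := ih _ hlt r hrTRP le_rfl
        exact ⟨q', hq', similar_trans hsim hsim', sigdvd_trans hdvd' hdvd⟩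
  intro q hq
  exact main _ q hq le_rfl

theorem topred_by_TRB {f : Fin d → MvPolynomial (Fin n) K} (mo : MonOrder n)
    (so : SigOrder n d) {P : PairT K n d}
    (hex : ∃ r, IsPair f r ∧ TopRed mo so P r) :
    ∃ r, IsTRB f mo so r ∧ TopRed mo so P r := by
  have hAne : { t : Sig n d | ∃ r : PairT K n d, (IsPair f r ∧ TopRed mo so P r) ∧
      t = Sig.smul (lmP mo P - lmP mo r) (sigP so r) }.Nonempty := by
    obtain ⟨r, h1, h2⟩ := hex
    exact ⟨_, r, ⟨h1, h2⟩, rfl⟩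
  obtain ⟨t₀, ht₀A, hmin⟩ := exists_min_sigset so hAne
  obtain ⟨r, ⟨hrpair, hrred⟩, ht₀⟩ := ht₀A
  have hrTRP : IsTRP f mo so r := by
    refine ⟨hrpair, hrred.2.1, ?_⟩
    intro r' hr'pair hred'
    have hPr' : TopRed mo so P r' :=
      ⟨hrred.1, hred'.2.1, pairLt_trans hrred.2.2.1 hred'.2.2.1,
        le_trans hred'.2.2.2 hrred.2.2.2⟩
    apply hmin _ ⟨r', ⟨hr'pair, hPr'⟩, rfl⟩
    rw [ht₀]
    apply so.cancel (m := lmP mo r + lmP mo r')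
    have hle1 : lmP mo r ≤ lmP mo P := hrred.2.2.2
    have hle2 : lmP mo r' ≤ lmP mo P := hPr'.2.2.2
    have e1 : Sig.smul (lmP mo r + lmP mo r')
        (Sig.smul (lmP mo P - lmP mo r') (sigP so r'))
        = Sig.smul (lmP mo P) (Sig.smul (lmP mo r) (sigP so r')) := by
      rw [Sig.smul_smul, Sig.smul_smul]
      congr 1
      rw [add_assoc, add_tsub_cancel_of_le hle2]
      exact add_comm _ _
    have e2 : Sig.smul (lmP mo r + lmP mo r')
        (Sig.smul (lmP mo P - lmP mo r) (sigP so r))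
        = Sig.smul (lmP mo P) (Sig.smul (lmP mo r') (sigP so r)) := by
      rw [Sig.smul_smul, Sig.smul_smul]
      congr 1
      rw [add_comm (lmP mo r) (lmP mo r'), add_assoc, add_tsub_cancel_of_le hle1]
      exact add_comm _ _
    rw [e1, e2]
    exact so.smul_lt_smul _ _ _ hred'.2.2.1
  obtain ⟨r'', hr''TRB, hsim, hdvd⟩ := exists_TRB_of_TRP mo so r hrTRP
  exact ⟨r'', hr''TRB, hrred.1, hr''TRB.1.2.1, pairLt_similar_right hrred.2.2.1 hsim,
    le_trans (lm_le_of_similar_dvd hsim hdvd) hrred.2.2.2⟩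

end Aux4
/-- Assume `f i ≠ 0` for all `i`. Let `s` be a TRB signature (the signature
of some TRB pair) that is not initial, i.e., `s ∉ {E_1,…,E_d}`. Then there exist two TRB
pairs whose J-pair `[m, p]` is signed `s`, i.e., `m·sig p = s`. -/
theorem TRB_sig_is_JPair_sig {K : Type*} [Field K] {n d : ℕ} [NeZero d]
    (mo : MonOrder n) (so : SigOrder n d) (f : Fin d → MvPolynomial (Fin n) K)
    (hf : ∀ i, f i ≠ 0) (s : Sig n d)
    (hs : ∃ p : PairT K n d, IsTRB f mo so p ∧ sigP so p = s)
    (hni : s.1 ≠ 0) :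
    ∃ (p₁ p₂ p : PairT K n d) (m : Mon n), IsTRB f mo so p₁ ∧ IsTRB f mo so p₂ ∧
      IsJPair mo so p₁ p₂ m p ∧ Sig.smul m (sigP so p) = s := by
  classical
  obtain ⟨ps, hpsTRB, hpssig⟩ := hs
  have hpsTRP := hpsTRB.1
  have hpspair : IsPair f ps := hpsTRP.1
  have hps2 : ps.2 ≠ 0 := hpsTRP.2.1
  have hpsnored := hpsTRP.2.2
  have hps1 : ps.1 ≠ 0 := fst_ne_zero hpspair hps2
  have hnosyz : ∀ β : Mon n, β ≤ s.1 →
      ¬ ∃ u : Fin d → MvPolynomial (Fin n) K, u ≠ 0 ∧ IsPair f (u, 0) ∧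
        so.sig u = (β, s.2) := by
    intro β hβ
    have h := no_syzygy_of_TRP mo so hpsTRP (β := β) (by rw [hpssig]; exact hβ)
    rwa [hpssig] at h
  by_contra hgoal
  -- a TRB pair with signature (0, s.2)
  obtain ⟨q₀, hq₀TRP, hq₀sig, -⟩ := exists_TRP_min mo so hf ((0 : Mon n), s.2)
    (hnosyz 0 (zero_le))
  obtain ⟨q₀', hq₀'TRB, -, hdvd₀⟩ := exists_TRB_of_TRP mo so q₀ hq₀TRP
  have hq₀'sig : sigP so q₀' = ((0 : Mon n), s.2) := by
    have h1 := hdvd₀.1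
    have h2 := hdvd₀.2
    rw [hq₀sig] at h1 h2
    refine Prod.ext ?_ h1
    show (sigP so q₀').1 = (0 : Mon n)
    exact nonpos_iff_eq_zero.mp h2
  -- minimize l over TRB pairs whose signature properly divides s
  obtain ⟨l₀, hl₀W, hl₀min⟩ := exists_min_monset mo.lt mo.trans
    (fun a b hab => mo.not_lt_of_le hab)
    (A := { l : Mon n | ∃ (q : PairT K n d) (δ : Mon n), IsTRB f mo so q ∧
      (sigP so q).2 = s.2 ∧ δ ≠ 0 ∧ δ + (sigP so q).1 = s.1 ∧ l = δ + lmP mo q })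
    ⟨s.1 + lmP mo q₀', q₀', s.1, hq₀'TRB, by rw [hq₀'sig], hni, by rw [hq₀'sig]; simp, rfl⟩
  obtain ⟨p₂, t, hp₂TRB, hp₂comp, ht0, htβ, hl₀⟩ := hl₀W
  have hp₂TRP := hp₂TRB.1
  have hp₂pair : IsPair f p₂ := hp₂TRP.1
  have hp₂2 : p₂.2 ≠ 0 := hp₂TRP.2.1
  have hp₂1 : p₂.1 ≠ 0 := fst_ne_zero hp₂pair hp₂2
  have hσ₂ : sigP so p₂ = ((sigP so p₂).1, s.2) := Prod.ext rfl hp₂comp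
  obtain ⟨hP2, hPlm⟩ := lmP_mulPair mo hp₂2 t
  obtain ⟨hP1, hPsig⟩ := sigP_mulPair so hp₂1 t
  have hPpair := isPair_mulPair hp₂pair t
  have hPlm' : lmP mo (mulPair (K := K) t p₂) = l₀ := by rw [hPlm, hl₀]
  have hPsig' : sigP so (mulPair (K := K) t p₂) = s := by
    rw [hPsig, hσ₂]
    simp only [Sig.smul]
    rw [htβ]
  -- (†) : l₀ ≠ lm(ps)
  have hneq : l₀ ≠ lmP mo ps := by
    intro heq
    have hsim : Similar mo so ps p₂ := by
      unfold Similar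
      rw [hpssig, hσ₂]
      simp only [Sig.smul]
      refine Prod.ext ?_ rfl
      show lmP mo ps + (sigP so p₂).1 = lmP mo p₂ + s.1
      rw [← heq, hl₀, ← htβ]
      abel
    have hdvd2 : SigDvd (sigP so p₂) (sigP so ps) := by
      constructor
      · rw [hpssig]; exact hp₂comp
      · rw [hpssig]
        exact le_iff_exists_add.mpr ⟨t, by rw [← htβ]; exact add_comm _ _⟩
    have heqsig := hpsTRB.2 p₂ hp₂TRP hsim hdvd2
    rw [hpssig] at heqsig
    have h1 : (sigP so p₂).1 = s.1 := congrArg Prod.fst heqsig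
    rw [h1] at htβ
    have h2 : t + s.1 = 0 + s.1 := by rw [zero_add]; exact htβ
    exact ht0 (add_right_cancel h2)
  -- the difference pair w
  set c1 : K := (ps.1 s.2).coeff s.1 with hc1def
  set c2 : K := (((mulPair (K := K) t p₂).1) s.2).coeff s.1 with hc2def
  have hc1 : c1 ≠ 0 := by
    have h := (so.sig_spec hps1).1
    have he : so.sig ps.1 = s := hpssig
    rw [he] at h
    exact h
  have hc2 : c2 ≠ 0 := by
    have h := (so.sig_spec hP1).1
    have he : so.sig ((mulPair (K := K) t p₂).1) = s := hPsig'
    rw [he] at h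
    exact h
  set w : PairT K n d := (fun k => c2 • ps.1 k - c1 • ((mulPair (K := K) t p₂).1 k),
    c2 • ps.2 - c1 • ((mulPair (K := K) t p₂).2)) with hwdef
  have hwpair : IsPair f w := isPair_combine hpspair hPpair c2 c1
  have hwcoeff : ∀ τ : Sig n d, (w.1 τ.2).coeff τ.1 ≠ 0 → so.lt τ s := by
    intro τ hτ
    have hτs : τ ≠ s := by
      intro h
      apply hτ
      rw [h, hwdef]
      simp only
      rw [MvPolynomial.coeff_sub, MvPolynomial.coeff_smul, MvPolynomial.coeff_smul,
        ← hc1def, ← hc2def, smul_eq_mul, smul_eq_mul, mul_comm c2 c1, sub_self]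
    have hor : (ps.1 τ.2).coeff τ.1 ≠ 0 ∨
        (((mulPair (K := K) t p₂).1) τ.2).coeff τ.1 ≠ 0 := by
      by_contra hcon
      push_neg at hcon
      apply hτ
      rw [hwdef]
      simp only
      rw [MvPolynomial.coeff_sub, MvPolynomial.coeff_smul, MvPolynomial.coeff_smul,
        hcon.1, hcon.2, smul_zero, smul_zero, sub_zero]
    rcases hor with h | h
    · rcases so.eq_sig_or_lt h with h' | h'
      · exact absurd (h'.trans hpssig) hτs
      · have he : so.sig ps.1 = s := hpssig
        rwa [he] at h'
    · rcases so.eq_sig_or_lt h with h' | h'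
      · exact absurd (h'.trans hPsig') hτs
      · have he : so.sig ((mulPair (K := K) t p₂).1) = s := hPsig'
        rwa [he] at h'
  -- P := t·p₂ is top reducible
  have hmain : TopRed mo so (mulPair (K := K) t p₂) w := by
    rcases mo.total (lmP mo ps) l₀ with hlt | heq | hlt
    · -- w top-reduces P
      have h1 : (ps.2).coeff l₀ = 0 := mo.coeff_eq_zero_of_lm_lt hlt
      have hco : (w.2).coeff l₀ ≠ 0 := by
        rw [hwdef]
        simp only
        rw [MvPolynomial.coeff_sub, MvPolynomial.coeff_smul, MvPolynomial.coeff_smul, h1,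
          smul_zero, zero_sub, neg_ne_zero]
        have h2 : (((mulPair (K := K) t p₂).2)).coeff l₀ ≠ 0 := by
          have h := mo.coeff_lm_ne_zero hP2
          have he : mo.lm ((mulPair (K := K) t p₂).2) = l₀ := hPlm'
          rwa [he] at h
        exact smul_ne_zero hc1 h2
      have hw2 : w.2 ≠ 0 := fun h => hco (by rw [h]; simp)
      have hwlm : lmP mo w = l₀ := by
        apply mo.lm_unique (MvPolynomial.mem_support_iff.mpr hco)
        intro b hb hbne
        have hbco := MvPolynomial.mem_support_iff.mp hb
        have hor : (ps.2).coeff b ≠ 0 ∨ (((mulPair (K := K) t p₂).2)).coeff b ≠ 0 := by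
          by_contra hcon
          push_neg at hcon
          apply hbco
          rw [hwdef]
          simp only
          rw [MvPolynomial.coeff_sub, MvPolynomial.coeff_smul, MvPolynomial.coeff_smul,
            hcon.1, hcon.2, smul_zero, smul_zero, sub_zero]
        rcases hor with h | h
        · rcases mo.eq_lm_or_lt h with h' | h'
          · rw [h']; exact hlt
          · exact mo.trans _ _ _ h' hlt
        · rcases mo.eq_lm_or_lt h with h' | h'
          · rw [show mo.lm ((mulPair (K := K) t p₂).2) = l₀ from hPlm'] at h'
            exact absurd h' hbne
          · rw [show mo.lm ((mulPair (K := K) t p₂).2) = l₀ from hPlm'] at h'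
            exact h'
      have hw1 : w.1 ≠ 0 := fst_ne_zero hwpair hw2
      have hwsig : so.lt (sigP so w) s := hwcoeff _ (so.sig_spec hw1).1
      refine ⟨hP2, hw2, ?_, le_of_eq ?_⟩
      · unfold PairLt
        rw [hwlm, hPlm', hPsig']
        exact so.smul_lt_smul _ _ _ hwsig
      · rw [hwlm, hPlm']
    · exact absurd heq.symm hneq
    · -- w would top-reduce ps : contradiction
      exfalso
      have h1 : (((mulPair (K := K) t p₂).2)).coeff (lmP mo ps) = 0 := by
        apply mo.coeff_eq_zero_of_lm_lt
        have he : mo.lm ((mulPair (K := K) t p₂).2) = l₀ := hPlm'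
        rw [he]
        exact hlt
      have hco : (w.2).coeff (lmP mo ps) ≠ 0 := by
        rw [hwdef]
        simp only
        rw [MvPolynomial.coeff_sub, MvPolynomial.coeff_smul, MvPolynomial.coeff_smul, h1,
          smul_zero, sub_zero]
        exact smul_ne_zero hc2 (mo.coeff_lm_ne_zero hps2)
      have hw2 : w.2 ≠ 0 := fun h => hco (by rw [h]; simp)
      have hwlm : lmP mo w = lmP mo ps := by
        apply mo.lm_unique (MvPolynomial.mem_support_iff.mpr hco)
        intro b hb hbne
        have hbco := MvPolynomial.mem_support_iff.mp hb
        have hor : (ps.2).coeff b ≠ 0 ∨ (((mulPair (K := K) t p₂).2)).coeff b ≠ 0 := by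
          by_contra hcon
          push_neg at hcon
          apply hbco
          rw [hwdef]
          simp only
          rw [MvPolynomial.coeff_sub, MvPolynomial.coeff_smul, MvPolynomial.coeff_smul,
            hcon.1, hcon.2, smul_zero, smul_zero, sub_zero]
        rcases hor with h | h
        · rcases mo.eq_lm_or_lt h with h' | h'
          · exact absurd h' hbne
          · exact h'
        · rcases mo.eq_lm_or_lt h with h' | h'
          · rw [show mo.lm ((mulPair (K := K) t p₂).2) = l₀ from hPlm'] at h'
            rw [h']; exact hlt
          · rw [show mo.lm ((mulPair (K := K) t p₂).2) = l₀ from hPlm'] at h'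
            exact mo.trans _ _ _ h' hlt
      have hw1 : w.1 ≠ 0 := fst_ne_zero hwpair hw2
      have hwsig : so.lt (sigP so w) s := hwcoeff _ (so.sig_spec hw1).1
      apply hpsnored w hwpair
      refine ⟨hps2, hw2, ?_, le_of_eq hwlm⟩
      unfold PairLt
      rw [hwlm]
      have he : sigP so ps = s := hpssig
      rw [he]
      exact so.smul_lt_smul _ _ _ hwsig
  obtain ⟨r, hrTRB, hrred⟩ := topred_by_TRB mo so ⟨w, hwpair, hmain⟩
  have hrpair : IsPair f r := hrTRB.1.1
  have hr2 : r.2 ≠ 0 := hrTRB.1.2.1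
  have hrle : lmP mo r ≤ l₀ := by
    have h := hrred.2.2.2
    rwa [hPlm'] at h
  have hrplt : PairLt mo so (mulPair (K := K) t p₂) r := hrred.2.2.1
  have hp₂r : PairLt mo so p₂ r := by
    apply so.cancel (m := t)
    unfold PairLt at hrplt
    have e1 : Sig.smul t (Sig.smul (lmP mo p₂) (sigP so r))
        = Sig.smul (lmP mo (mulPair (K := K) t p₂)) (sigP so r) := by
      rw [hPlm, Sig.smul_smul]
    have e2 : Sig.smul t (Sig.smul (lmP mo r) (sigP so p₂))
        = Sig.smul (lmP mo r) (sigP so (mulPair (K := K) t p₂)) := by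
      rw [smul_comm', hPsig]
    rw [e1, e2]
    exact hrplt
  by_cases hcase : l₀ ≤ lmP mo r ⊔ lmP mo p₂
  · -- success : produce the J-pair
    have hsup : lmP mo r ⊔ lmP mo p₂ = l₀ := by
      apply le_antisymm _ hcase
      apply sup_le hrle
      rw [hl₀]
      exact le_add_self
    apply hgoal
    refine ⟨r, p₂, p₂, t, hrTRB, hp₂TRB, ⟨hr2, hp₂2, ?_, Or.inr ⟨hp₂r, rfl⟩, ?_⟩, ?_⟩
    · intro hsim
      unfold Similar at hsim
      unfold PairLt at hp₂r
      rw [hsim] at hp₂r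
      exact so.irrefl _ hp₂r
    · rw [hsup, hl₀]
    · rw [hσ₂]
      simp only [Sig.smul]
      rw [htβ]
  · -- mismatch : contradiction with minimality of l₀
    rw [Finsupp.le_def] at hcase
    push_neg at hcase
    obtain ⟨j, hj⟩ := hcase
    have hjsup : (lmP mo r ⊔ lmP mo p₂) j = lmP mo r j ⊔ lmP mo p₂ j := Finsupp.sup_apply _ _ _
    have hj1 : lmP mo r j < l₀ j := by
      rw [hjsup] at hj
      exact lt_of_le_of_lt le_sup_left hj
    have hj2 : lmP mo p₂ j < l₀ j := by
      rw [hjsup] at hj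
      exact lt_of_le_of_lt le_sup_right hj
    have hl₀j : l₀ j = t j + lmP mo p₂ j := by
      rw [hl₀]
      exact Finsupp.add_apply _ _ _
    have htj : 1 ≤ t j := by omega
    set e : Mon n := Finsupp.single j 1 with hedef
    have hej : e j = 1 := by rw [hedef]; simp
    have het : e ≤ t := Finsupp.single_le_iff.mpr htj
    have hte : (t - e) + e = t := tsub_add_cancel_of_le het
    set t' : Mon n := t - e with ht'def
    obtain ⟨hP'2, hP'lm⟩ := lmP_mulPair mo hp₂2 t'
    obtain ⟨hP'1, hP'sig⟩ := sigP_mulPair so hp₂1 t'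
    have hP'pair := isPair_mulPair hp₂pair t'
    have hl' : e + lmP mo (mulPair (K := K) t' p₂) = l₀ := by
      rw [hP'lm, hl₀, ← hte]
      abel
    have hrle' : lmP mo r ≤ lmP mo (mulPair (K := K) t' p₂) := by
      rw [Finsupp.le_def]
      intro k
      have hk := Finsupp.le_def.mp hrle k
      have hl'k : e k + (lmP mo (mulPair (K := K) t' p₂)) k = l₀ k := by
        have h := DFunLike.congr_fun hl' k
        rwa [Finsupp.add_apply] at h
      by_cases hkj : k = j
      · subst hkj
        omega
      · have hek : e k = 0 := by rw [hedef]; simp [Finsupp.single_apply, Ne.symm hkj]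
        omega
    have hplt' : PairLt mo so (mulPair (K := K) t' p₂) r := by
      apply so.cancel (m := e)
      unfold PairLt at hrplt
      have e1 : Sig.smul e (Sig.smul (lmP mo (mulPair (K := K) t' p₂)) (sigP so r))
          = Sig.smul (lmP mo (mulPair (K := K) t p₂)) (sigP so r) := by
        rw [hP'lm, hPlm, Sig.smul_smul]
        congr 1
        rw [← hte]
        abel
      have e2 : Sig.smul e (Sig.smul (lmP mo r) (sigP so (mulPair (K := K) t' p₂)))
          = Sig.smul (lmP mo r) (sigP so (mulPair (K := K) t p₂)) := by
        rw [hP'sig, hPsig, smul_comm']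
        simp only [Sig.smul]
        refine Prod.ext ?_ rfl
        show lmP mo r + (e + (t' + (sigP so p₂).1)) = lmP mo r + (t + (sigP so p₂).1)
        rw [← hte]
        abel
      rw [e1, e2]
      exact hrplt
    have hS'le : t' + (sigP so p₂).1 ≤ s.1 := by
      rw [← htβ, ← hte]
      exact le_iff_exists_add.mpr ⟨e, by abel⟩
    obtain ⟨q', hq'TRP, hq'sig, hq'min⟩ := exists_TRP_min mo so hf
      ((t' + (sigP so p₂).1, s.2)) (hnosyz (t' + (sigP so p₂).1) hS'le)
    have hq'pair : IsPair f q' := hq'TRP.1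
    have hP'sig' : sigP so (mulPair (K := K) t' p₂)
        = ((t' + (sigP so p₂).1, s.2) : Sig n d) := by
      rw [hP'sig, hσ₂]
      simp only [Sig.smul]
    have hnotlt : ¬ mo.lt (lmP mo (mulPair (K := K) t' p₂)) (lmP mo q') :=
      hq'min _ hP'pair hP'2 hP'sig'
    rcases mo.total (lmP mo q') (lmP mo (mulPair (K := K) t' p₂)) with hlt' | heq' | hlt''
    · -- strictly smaller minimal TRP : beat minimality of l₀
      obtain ⟨q'', hq''TRB, hsim'', hdvd''⟩ := exists_TRB_of_TRP mo so q' hq'TRP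
      have hcomp'' : (sigP so q'').2 = s.2 := by
        have h := hdvd''.1
        rw [hq'sig] at h
        exact h
      obtain ⟨ε, hε⟩ := le_iff_exists_add.mp (show (sigP so q'').1 ≤ t' + (sigP so p₂).1 by
        have h := hdvd''.2
        rw [hq'sig] at h
        exact h)
      have hlm'' : lmP mo q' = lmP mo q'' + ε := by
        have hsim2 := hsim''
        unfold Similar Sig.smul at hsim2
        rw [Prod.mk.injEq] at hsim2
        have h1 := hsim2.1
        have h2 : (sigP so q').1 = (sigP so q'').1 + ε := by rw [hq'sig]; exact hε
        rw [h2] at h1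
        have h3 : lmP mo q' + (sigP so q'').1 = (lmP mo q'' + ε) + (sigP so q'').1 := by
          rw [h1]; abel
        exact add_right_cancel h3
      have hmem : (ε + e) + lmP mo q'' ∈ { l : Mon n | ∃ (q : PairT K n d) (δ : Mon n),
          IsTRB f mo so q ∧ (sigP so q).2 = s.2 ∧ δ ≠ 0 ∧ δ + (sigP so q).1 = s.1 ∧
          l = δ + lmP mo q } := by
        refine ⟨q'', ε + e, hq''TRB, hcomp'', ?_, ?_, rfl⟩
        · intro h0
          have h1 : (ε + e) j = 0 := by rw [h0]; simp
          rw [Finsupp.add_apply, hej] at h1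
          omega
        · calc (ε + e) + (sigP so q'').1 = ((sigP so q'').1 + ε) + e := by abel
            _ = (t' + (sigP so p₂).1) + e := by rw [← hε]
            _ = (t' + e) + (sigP so p₂).1 := by abel
            _ = t + (sigP so p₂).1 := by rw [hte]
            _ = s.1 := htβ
      apply hl₀min _ hmem
      have h5 : (ε + e) + lmP mo q'' = e + lmP mo q' := by
        rw [hlm'']
        abel
      rw [h5, ← hl']
      exact mo.mul_lt_mul e _ _ hlt'
    · -- equal leading monomials : q' would be top-reducible
      have hredq' : TopRed mo so q' r := by
        refine ⟨hq'TRP.2.1, hr2, ?_, ?_⟩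
        · unfold PairLt
          rw [heq', hq'sig, ← hP'sig']
          exact hplt'
        · rw [heq']
          exact hrle'
      exact hq'TRP.2.2 r hrpair hredq'
    · exact hnotlt hlt''

end TRB
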